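/- arXiv:1511.01408 — 3 statements merged into one kernel-verified Lean document; each statement's English description precedes it below -/
import Mathlib

section
/- A bounded linear operator A on a complex Banach space X is polaroid if and only if its dual operator A* on the dual space X* is polaroid. -/
open Metric Filter NormedSpace
open scoped Classical ENNReal

variable {X : Type*} [NormedAddCommGroup X] [NormedSpace ℂ X]

/-- The ascent of an operator `T`: the least `n ≥ 0` with `ker Tⁿ = ker Tⁿ⁺¹`,
and `⊤` if no such `n` exists. -/
noncomputable def ascent (T : X →L[ℂ] X) : ℕ∞ :=
  if ∃ n : ℕ, LinearMap.ker ((T ^ n : X →L[ℂ] X) : X →ₗ[ℂ] X) = LinearMap.ker ((T ^ (n + 1) : X →L[ℂ] X) : X →ₗ[ℂ] X) then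
    ((sInf {n : ℕ | LinearMap.ker ((T ^ n : X →L[ℂ] X) : X →ₗ[ℂ] X) = LinearMap.ker ((T ^ (n + 1) : X →L[ℂ] X) : X →ₗ[ℂ] X)} : ℕ) : ℕ∞)
  else ⊤

/-- The descent of an operator `T`: the least `n ≥ 0` with `ran Tⁿ = ran Tⁿ⁺¹`,
and `⊤` if no such `n` exists. -/
noncomputable def descent (T : X →L[ℂ] X) : ℕ∞ :=
  if ∃ n : ℕ, LinearMap.range ((T ^ n : X →L[ℂ] X) : X →ₗ[ℂ] X) = LinearMap.range ((T ^ (n + 1) : X →L[ℂ] X) : X →ₗ[ℂ] X) then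
    ((sInf {n : ℕ | LinearMap.range ((T ^ n : X →L[ℂ] X) : X →ₗ[ℂ] X) = LinearMap.range ((T ^ (n + 1) : X →L[ℂ] X) : X →ₗ[ℂ] X)} : ℕ) : ℕ∞)
  else ⊤

/-- `lam` is an isolated point of the set `s ⊆ ℂ`. -/
def IsIsolatedPointOf (lam : ℂ) (s : Set ℂ) : Prop :=
  lam ∈ s ∧ ∃ U ∈ nhds lam, U ∩ s = {lam}

/-- `lam` is a pole of (the resolvent of) `T`: an isolated point of the spectrum with
`asc(T - lam) = dsc(T - lam) < ∞`. -/
def IsPoleOf (T : X →L[ℂ] X) (lam : ℂ) : Prop :=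
  IsIsolatedPointOf lam (spectrum ℂ T) ∧
    ascent (T - lam • 1) = descent (T - lam • 1) ∧ ascent (T - lam • 1) ≠ ⊤

/-- `T` is polaroid: every isolated point of the spectrum is a pole. -/
def Polaroid (T : X →L[ℂ] X) : Prop :=
  ∀ lam : ℂ, IsIsolatedPointOf lam (spectrum ℂ T) → IsPoleOf T lam

/-- The dual (transpose) operator `A*` acting on the dual space `X*`:
`(dualOp A) φ = φ ∘ A`. -/
noncomputable def dualOp (A : X →L[ℂ] X) : StrongDual ℂ X →L[ℂ] StrongDual ℂ X :=
  (ContinuousLinearMap.compL ℂ X X ℂ).flip A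

set_option linter.unusedSectionVars false
namespace PolaroidAux

open ContinuousLinearMap

variable {X : Type*} [NormedAddCommGroup X] [NormedSpace ℂ X]

lemma mem_ker' {E F : Type*} [TopologicalSpace E] [AddCommMonoid E] [Module ℂ E]
    [TopologicalSpace F] [AddCommMonoid F] [Module ℂ F] {f : E →L[ℂ] F} {x : E} :
    x ∈ LinearMap.ker f.toLinearMap ↔ f x = 0 := LinearMap.mem_ker

lemma dualOp_apply' (A : X →L[ℂ] X) (φ : StrongDual ℂ X) (x : X) : dualOp A φ x = φ (A x) := rfl

set_option synthInstance.maxHeartbeats 400000 in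
lemma dualOp_pow_apply (A : X →L[ℂ] X) (n : ℕ) (φ : StrongDual ℂ X) (x : X) :
    ((dualOp A) ^ n) φ x = φ ((A ^ n) x) := by
  induction n generalizing φ with
  | zero => simp
  | succ n ih =>
    rw [pow_succ (dualOp A) n, pow_succ' A n, ContinuousLinearMap.mul_apply, ih (dualOp A φ), ContinuousLinearMap.mul_apply]
    rfl

lemma ker_pow_le_succ (f : X →L[ℂ] X) (n : ℕ) :
    LinearMap.ker (f ^ n).toLinearMap ≤ LinearMap.ker (f ^ (n + 1)).toLinearMap := by
  intro x hx
  rw [mem_ker'] at *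
  rw [pow_succ' f n, ContinuousLinearMap.mul_apply, hx, map_zero]

lemma range_pow_succ_le (f : X →L[ℂ] X) (n : ℕ) :
    LinearMap.range (f ^ (n + 1)).toLinearMap ≤ LinearMap.range (f ^ n).toLinearMap := by
  rintro y ⟨x, rfl⟩
  exact ⟨f x, by rw [ContinuousLinearMap.coe_coe, ContinuousLinearMap.coe_coe, pow_succ f n, ContinuousLinearMap.mul_apply]⟩

lemma ker_pow_stab (f : X →L[ℂ] X) {p : ℕ}
    (h : LinearMap.ker (f ^ p).toLinearMap = LinearMap.ker (f ^ (p + 1)).toLinearMap) :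
    ∀ m, p ≤ m → LinearMap.ker (f ^ m).toLinearMap = LinearMap.ker (f ^ p).toLinearMap := by
  intro m hm
  induction m, hm using Nat.le_induction with
  | base => rfl
  | succ m hm ih =>
    refine le_antisymm ?_ ?_
    · intro x hx
      rw [mem_ker'] at hx
      have hfx : f x ∈ LinearMap.ker (f ^ m).toLinearMap := by
        rw [mem_ker', ← ContinuousLinearMap.mul_apply (f ^ m) f, ← pow_succ f m]
        exact hx
      rw [ih] at hfx
      have : x ∈ LinearMap.ker (f ^ (p + 1)).toLinearMap := by
        rw [mem_ker', pow_succ f p, ContinuousLinearMap.mul_apply]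
        exact hfx
      rw [← h] at this
      exact this
    · rw [← ih]
      exact ker_pow_le_succ f m

lemma range_pow_stab (f : X →L[ℂ] X) {p : ℕ}
    (h : LinearMap.range (f ^ p).toLinearMap = LinearMap.range (f ^ (p + 1)).toLinearMap) :
    ∀ m, p ≤ m → LinearMap.range (f ^ m).toLinearMap = LinearMap.range (f ^ p).toLinearMap := by
  intro m hm
  induction m, hm using Nat.le_induction with
  | base => rfl
  | succ m hm ih =>
    refine le_antisymm ?_ ?_
    · rw [← ih]
      exact range_pow_succ_le f m
    · rintro y ⟨x, rfl⟩
      have h1 : (f ^ p) x ∈ LinearMap.range (f ^ (p + 1)).toLinearMap := h ▸ ⟨x, rfl⟩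
      obtain ⟨w, hw⟩ := h1
      have h2 : (f ^ p) w ∈ LinearMap.range (f ^ m).toLinearMap := ih ▸ ⟨w, rfl⟩
      obtain ⟨u, hu⟩ := h2
      refine ⟨u, ?_⟩
      simp only [ContinuousLinearMap.coe_coe] at hu hw ⊢
      rw [pow_succ' f m, ContinuousLinearMap.mul_apply, hu, ← ContinuousLinearMap.mul_apply f (f ^ p), ← pow_succ' f p, hw]

lemma sInf_ker_eq_sInf_range (f : X →L[ℂ] X)
    (hk : ∃ n, LinearMap.ker (f ^ n).toLinearMap = LinearMap.ker (f ^ (n + 1)).toLinearMap)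
    (hr : ∃ n, LinearMap.range (f ^ n).toLinearMap = LinearMap.range (f ^ (n + 1)).toLinearMap) :
    sInf {n : ℕ | LinearMap.ker (f ^ n).toLinearMap = LinearMap.ker (f ^ (n + 1)).toLinearMap} =
      sInf {n : ℕ | LinearMap.range (f ^ n).toLinearMap = LinearMap.range (f ^ (n + 1)).toLinearMap} := by
  set a := sInf {n : ℕ | LinearMap.ker (f ^ n).toLinearMap = LinearMap.ker (f ^ (n + 1)).toLinearMap} with ha_def
  set d := sInf {n : ℕ | LinearMap.range (f ^ n).toLinearMap = LinearMap.range (f ^ (n + 1)).toLinearMap} with hd_def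
  have ha : LinearMap.ker (f ^ a).toLinearMap = LinearMap.ker (f ^ (a + 1)).toLinearMap := Nat.sInf_mem hk
  have hd : LinearMap.range (f ^ d).toLinearMap = LinearMap.range (f ^ (d + 1)).toLinearMap := Nat.sInf_mem hr
  have hdk : LinearMap.ker (f ^ d).toLinearMap = LinearMap.ker (f ^ (d + 1)).toLinearMap := by
    refine le_antisymm (ker_pow_le_succ f d) ?_
    intro x hx
    rw [mem_ker'] at hx ⊢
    have h1 : (f ^ d) x ∈ LinearMap.range (f ^ (d + a + 1)).toLinearMap := by
      rw [range_pow_stab f hd (d + a + 1) (by omega)]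
      exact ⟨x, rfl⟩
    obtain ⟨y, hy⟩ := h1
    rw [ContinuousLinearMap.coe_coe] at hy
    have h2 : (f ^ (d + a + 1 + 1)) y = 0 := by
      rw [pow_succ' f (d + a + 1), ContinuousLinearMap.mul_apply, hy, ← ContinuousLinearMap.mul_apply f (f ^ d), ← pow_succ' f d, hx]
    have h3 : y ∈ LinearMap.ker (f ^ (d + a + 1)).toLinearMap := by
      have e1 : LinearMap.ker (f ^ (d + a + 1 + 1)).toLinearMap = LinearMap.ker (f ^ a).toLinearMap :=
        ker_pow_stab f ha _ (by omega)
      have e2 : LinearMap.ker (f ^ (d + a + 1)).toLinearMap = LinearMap.ker (f ^ a).toLinearMap :=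
        ker_pow_stab f ha _ (by omega)
      rw [e2, ← e1]
      exact h2
    rw [mem_ker'] at h3
    rw [← hy, h3]
  have haled : a ≤ d := Nat.sInf_le hdk
  have hra : LinearMap.range (f ^ a).toLinearMap = LinearMap.range (f ^ (a + 1)).toLinearMap := by
    refine le_antisymm ?_ (range_pow_succ_le f a)
    rintro y ⟨x, rfl⟩
    have h1 : (f ^ d) x ∈ LinearMap.range (f ^ (d + 1)).toLinearMap := hd ▸ ⟨x, rfl⟩
    obtain ⟨z, hz⟩ := h1
    rw [ContinuousLinearMap.coe_coe] at hz
    have h2 : x - f z ∈ LinearMap.ker (f ^ d).toLinearMap := by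
      rw [mem_ker', map_sub, ← ContinuousLinearMap.mul_apply (f ^ d) f, ← pow_succ f d, hz, sub_self]
    rw [ker_pow_stab f ha d haled, mem_ker', map_sub, sub_eq_zero] at h2
    refine ⟨z, ?_⟩
    simp only [ContinuousLinearMap.coe_coe]
    rw [pow_succ f a, ContinuousLinearMap.mul_apply, ← h2]
  exact le_antisymm haled (Nat.sInf_le hra)

lemma eq_zero_of_forall_dual {x : X} (h : ∀ φ : StrongDual ℂ X, φ x = 0) : x = 0 := by
  by_contra hx
  obtain ⟨f, hf⟩ := SeparatingDual.exists_ne_zero (R := ℂ) hx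
  exact hf (h f)

lemma exists_dual_annihilator {M : Submodule ℂ X} (hM : IsClosed (M : Set X)) {x : X}
    (hx : x ∉ M) : ∃ φ : StrongDual ℂ X, (∀ m ∈ M, φ m = 0) ∧ φ x ≠ 0 := by
  haveI : IsClosed (M : Set X) := hM
  have hq : (Submodule.Quotient.mk x : X ⧸ M) ≠ 0 := by
    simpa [Submodule.Quotient.mk_eq_zero] using hx
  obtain ⟨g, hg⟩ := SeparatingDual.exists_ne_zero (R := ℂ) hq
  let π : X →L[ℂ] (X ⧸ M) :=
    LinearMap.mkContinuous M.mkQ 1 (fun m => by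
      simpa [one_mul] using Submodule.Quotient.norm_mk_le M m)
  refine ⟨g.comp π, fun m hm => ?_, ?_⟩
  · have : π m = 0 := by
      show (Submodule.Quotient.mk m : X ⧸ M) = 0
      simpa [Submodule.Quotient.mk_eq_zero] using hm
    simp [this]
  · exact hg

lemma mem_topologicalClosure_of_dual (M : Submodule ℂ X) (x : X)
    (h : ∀ φ : StrongDual ℂ X, (∀ m ∈ M, φ m = 0) → φ x = 0) : x ∈ M.topologicalClosure := by
  by_contra hx
  obtain ⟨φ, h1, h2⟩ :=
    exists_dual_annihilator (M := M.topologicalClosure) M.isClosed_topologicalClosure hx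
  exact h2 (h φ (fun m hm => h1 m (M.le_topologicalClosure hm)))



variable [CompleteSpace X]

set_option maxHeartbeats 1000000 in
theorem dual_stab (f : X →L[ℂ] X) (p : ℕ)
    (hk : LinearMap.ker (f ^ p).toLinearMap = LinearMap.ker (f ^ (p + 1)).toLinearMap)
    (hr : LinearMap.range (f ^ p).toLinearMap = LinearMap.range (f ^ (p + 1)).toLinearMap) :
    LinearMap.ker ((dualOp f) ^ p).toLinearMap = LinearMap.ker ((dualOp f) ^ (p + 1)).toLinearMap ∧
      LinearMap.range ((dualOp f) ^ p).toLinearMap = LinearMap.range ((dualOp f) ^ (p + 1)).toLinearMap := by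
  have hpow2 : ∀ x : X, (f ^ (p + p)) x = (f ^ p) ((f ^ p) x) := by
    intro x; rw [pow_add, ContinuousLinearMap.mul_apply]
  have hcoe : ∀ (n : ℕ) (x : X), ((f : X →ₗ[ℂ] X) ^ n) x = (f ^ n) x := by
    intro n
    induction n with
    | zero => intro x; rfl
    | succ n ih =>
      intro x
      rw [pow_succ, pow_succ, Module.End.mul_apply, ContinuousLinearMap.mul_apply]
      exact ih _
  constructor
  · ext φ
    rw [mem_ker', mem_ker']
    constructor
    · intro h
      ext x
      have h1 : (f ^ (p + 1)) x ∈ LinearMap.range (f ^ p).toLinearMap := hr ▸ ⟨x, rfl⟩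
      obtain ⟨x', hx'⟩ := h1
      rw [ContinuousLinearMap.coe_coe] at hx'
      show ((dualOp f) ^ (p + 1)) φ x = 0
      rw [dualOp_pow_apply, ← hx', ← dualOp_pow_apply, h]
      rfl
    · intro h
      ext x
      have h1 : (f ^ p) x ∈ LinearMap.range (f ^ (p + 1)).toLinearMap := hr ▸ ⟨x, rfl⟩
      obtain ⟨x', hx'⟩ := h1
      rw [ContinuousLinearMap.coe_coe] at hx'
      show ((dualOp f) ^ p) φ x = 0
      rw [dualOp_pow_apply, ← hx', ← dualOp_pow_apply, h]
      rfl
  · refine le_antisymm ?_ (range_pow_succ_le (dualOp f) p)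
    rintro ψ ⟨φ, rfl⟩
    have hk2 : LinearMap.ker (f ^ (p + p)).toLinearMap = LinearMap.ker (f ^ p).toLinearMap :=
      ker_pow_stab f hk (p + p) (by omega)
    have hr2 : LinearMap.range (f ^ (p + p)).toLinearMap = LinearMap.range (f ^ p).toLinearMap :=
      range_pow_stab f hr (p + p) (by omega)
    have hNclosed : IsClosed ((LinearMap.ker (f ^ p).toLinearMap : Submodule ℂ X) : Set X) :=
      isClosed_ker (f ^ p)
    haveI : CompleteSpace (LinearMap.ker (f ^ p).toLinearMap) := hNclosed.completeSpace_coe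
    let W : (X × LinearMap.ker (f ^ p).toLinearMap) →L[ℂ] X :=
      ((f ^ (p + p)).comp (ContinuousLinearMap.fst ℂ X (LinearMap.ker (f ^ p).toLinearMap))) +
        ((LinearMap.ker (f ^ p).toLinearMap).subtypeL.comp
          (ContinuousLinearMap.snd ℂ X (LinearMap.ker (f ^ p).toLinearMap)))
    have hW : ∀ w : X × LinearMap.ker (f ^ p).toLinearMap, W w = (f ^ (p + p)) w.1 + (w.2 : X) :=
      fun w => rfl
    have hWsurj : Function.Surjective W := by
      intro y
      have h1 : (f ^ p) y ∈ LinearMap.range (f ^ (p + p)).toLinearMap := hr2 ▸ ⟨y, rfl⟩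
      obtain ⟨w, hw⟩ := h1
      rw [ContinuousLinearMap.coe_coe] at hw
      have h2 : (f ^ p) w ∈ LinearMap.range (f ^ (p + p)).toLinearMap := hr2 ▸ ⟨w, rfl⟩
      obtain ⟨z, hz⟩ := h2
      rw [ContinuousLinearMap.coe_coe] at hz
      have hmem : y - (f ^ p) w ∈ LinearMap.ker (f ^ p).toLinearMap := by
        rw [mem_ker', map_sub, ← hpow2 w, hw, sub_self]
      refine ⟨(z, ⟨y - (f ^ p) w, hmem⟩), ?_⟩
      rw [hW]
      show (f ^ (p + p)) z + (y - (f ^ p) w) = y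
      rw [hz]
      abel
    obtain ⟨Cw, hCwpos, hCw⟩ := W.exists_preimage_norm_le hWsurj
    have key : ∀ x : X, ∃ z : X, (f ^ (p + p)) z = (f ^ p) x ∧ ‖z‖ ≤ Cw * ‖(f ^ p) x‖ := by
      intro x
      obtain ⟨w, hw1, hw2⟩ := hCw ((f ^ p) x)
      rw [hW] at hw1
      have hn2 : (w.2 : X) = (f ^ p) (x - (f ^ p) w.1) := by
        rw [map_sub, ← hpow2 w.1, ← hw1]
        abel
      have hz0 : (w.2 : X) = 0 := by
        have hker : (f ^ p) (w.2 : X) = 0 := w.2.2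
        have hmem : x - (f ^ p) w.1 ∈ LinearMap.ker (f ^ (p + p)).toLinearMap := by
          rw [mem_ker', hpow2, ← hn2, hker]
        rw [hk2, mem_ker'] at hmem
        rw [hn2, hmem]
      refine ⟨w.1, ?_, ?_⟩
      · rw [hz0, add_zero] at hw1
        exact hw1
      · exact le_trans (norm_fst_le w) hw2
    have hRclosed : IsClosed ((LinearMap.range (f ^ p).toLinearMap : Submodule ℂ X) : Set X) := by
      let F : NormedAddGroupHom X X :=
        { toFun := fun x => (f ^ p) x
          map_add' := fun x y => map_add _ x y
          bound' := ⟨‖f ^ p‖ + 1, fun v =>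
            ((f ^ p).le_opNorm v).trans
              (mul_le_mul_of_nonneg_right (by linarith [norm_nonneg (f ^ p)])
                (norm_nonneg v))⟩ }
      have hCpos : (0:ℝ) < (‖f ^ p‖ + 1) * Cw := by positivity
      have hyp : F.SurjectiveOnWith (LinearMap.range (f ^ p).toLinearMap).toAddSubgroup
          ((‖f ^ p‖ + 1) * Cw) := by
        intro h hh
        rw [Submodule.mem_toAddSubgroup] at hh
        obtain ⟨x, rfl⟩ := hh
        obtain ⟨z, hz1, hz2⟩ := key x
        refine ⟨(f ^ p) z, ?_, ?_⟩
        · show (f ^ p) ((f ^ p) z) = (f ^ p) x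
          rw [← hpow2, hz1]
        · calc ‖(f ^ p) z‖ ≤ ‖f ^ p‖ * ‖z‖ := (f ^ p).le_opNorm z
            _ ≤ ‖f ^ p‖ * (Cw * ‖(f ^ p) x‖) :=
                mul_le_mul_of_nonneg_left hz2 (norm_nonneg _)
            _ ≤ (‖f ^ p‖ + 1) * Cw * ‖(f ^ p) x‖ := by
                rw [← mul_assoc]
                apply mul_le_mul_of_nonneg_right _ (norm_nonneg _)
                apply mul_le_mul_of_nonneg_right _ (le_of_lt hCwpos)
                linarith
      have h2 := controlled_closure_of_complete hCpos one_pos hyp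
      apply isClosed_of_closure_subset
      intro y hy
      have hyK : y ∈ (LinearMap.range (f ^ p).toLinearMap).toAddSubgroup.topologicalClosure := by
        show y ∈ closure ((LinearMap.range (f ^ p).toLinearMap).toAddSubgroup : Set X)
        rwa [Submodule.coe_toAddSubgroup]
      obtain ⟨g, hg1, -⟩ := h2 y hyK
      exact ⟨g, hg1⟩
    haveI : CompleteSpace (LinearMap.range (f ^ p).toLinearMap) := hRclosed.completeSpace_coe
    have hmem : ∀ x, (f ^ (p + 1)) x ∈ LinearMap.range (f ^ p).toLinearMap := fun x => by
      rw [hr]; exact ⟨x, rfl⟩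
    let B : X →L[ℂ] LinearMap.range (f ^ p).toLinearMap :=
      (f ^ (p + 1)).codRestrict (LinearMap.range (f ^ p).toLinearMap) hmem
    have hBcoe : ∀ x : X, ((B x : LinearMap.range (f ^ p).toLinearMap) : X) = (f ^ (p + 1)) x :=
      fun x => rfl
    have hBsurj : Function.Surjective B := by
      rintro ⟨y, hy⟩
      rw [hr] at hy
      obtain ⟨x, hx⟩ := hy
      exact ⟨x, Subtype.ext hx⟩
    obtain ⟨C2, hC2pos, hC2⟩ := B.exists_preimage_norm_le hBsurj
    obtain ⟨g, hg⟩ := (B : X →ₗ[ℂ] LinearMap.range (f ^ p).toLinearMap).exists_rightInverse_of_surjective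
      (LinearMap.range_eq_top.2 (by exact hBsurj))
    have hgapply : ∀ r : LinearMap.range (f ^ p).toLinearMap, B (g r) = r := fun r => by
      have := LinearMap.ext_iff.1 hg r
      simpa using this
    have hgB : ∀ x : X, (f ^ p) (g (B x)) = (f ^ p) x := by
      intro x
      have h1 : B (g (B x)) = B x := hgapply (B x)
      have h2 : (f ^ (p + 1)) (g (B x)) = (f ^ (p + 1)) x := by
        have := congrArg (fun r : LinearMap.range (f ^ p).toLinearMap => (r : X)) h1
        simpa [hBcoe] using this
      have h3 : g (B x) - x ∈ LinearMap.ker (f ^ (p + 1)).toLinearMap := by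
        rw [mem_ker', map_sub, h2, sub_self]
      rw [← hk, mem_ker', map_sub, sub_eq_zero] at h3
      exact h3
    let χlin : (LinearMap.range (f ^ p).toLinearMap) →ₗ[ℂ] ℂ :=
      (φ : X →ₗ[ℂ] ℂ).comp (((f ^ p) : X →ₗ[ℂ] X).comp g)
    have hχval : ∀ r : LinearMap.range (f ^ p).toLinearMap, χlin r = φ ((f ^ p) (g r)) := fun r => by
      show ((φ : X →ₗ[ℂ] ℂ).comp ((((f ^ p) : X →ₗ[ℂ] X)).comp g)) r = _
      simp [LinearMap.comp_apply, hcoe]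
    have hbound : ∀ r : LinearMap.range (f ^ p).toLinearMap, ‖χlin r‖ ≤ ‖φ‖ * ‖f ^ p‖ * C2 * ‖r‖ := by
      intro r
      obtain ⟨x, hx1, hx2⟩ := hC2 r
      have hval : χlin r = φ ((f ^ p) x) := by
        rw [hχval, ← hx1, hgB]
      rw [hval]
      calc ‖φ ((f ^ p) x)‖ ≤ ‖φ‖ * ‖(f ^ p) x‖ := φ.le_opNorm _
        _ ≤ ‖φ‖ * (‖f ^ p‖ * ‖x‖) :=
            mul_le_mul_of_nonneg_left ((f ^ p).le_opNorm x) (norm_nonneg _)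
        _ ≤ ‖φ‖ * (‖f ^ p‖ * (C2 * ‖r‖)) := by
            apply mul_le_mul_of_nonneg_left _ (norm_nonneg _)
            exact mul_le_mul_of_nonneg_left hx2 (norm_nonneg _)
        _ = ‖φ‖ * ‖f ^ p‖ * C2 * ‖r‖ := by ring
    let χ0 : (LinearMap.range (f ^ p).toLinearMap) →L[ℂ] ℂ := χlin.mkContinuousOfExistsBound ⟨_, hbound⟩
    have hχ0val : ∀ r : LinearMap.range (f ^ p).toLinearMap, χ0 r = χlin r := fun r => rfl
    obtain ⟨χ, hχ, -⟩ := exists_extension_norm_eq (LinearMap.range (f ^ p).toLinearMap) χ0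
    refine ⟨χ, ?_⟩
    ext x
    simp only [ContinuousLinearMap.coe_coe]
    rw [dualOp_pow_apply, dualOp_pow_apply]
    have h1 : χ ((f ^ (p + 1)) x) = χ0 (B x) := by
      rw [← hBcoe x]
      exact hχ (B x)
    rw [h1, hχ0val, hχval, hgB]


set_option maxHeartbeats 1000000 in
theorem stab_of_dual (f : X →L[ℂ] X) (p : ℕ)
    (hk : LinearMap.ker ((dualOp f) ^ p).toLinearMap = LinearMap.ker ((dualOp f) ^ (p + 1)).toLinearMap)
    (hr : LinearMap.range ((dualOp f) ^ p).toLinearMap = LinearMap.range ((dualOp f) ^ (p + 1)).toLinearMap) :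
    LinearMap.ker (f ^ p).toLinearMap = LinearMap.ker (f ^ (p + 1)).toLinearMap ∧
      LinearMap.range (f ^ p).toLinearMap = LinearMap.range (f ^ (p + 1)).toLinearMap := by
  constructor
  · refine le_antisymm (ker_pow_le_succ f p) ?_
    intro x hx
    rw [mem_ker'] at hx ⊢
    apply eq_zero_of_forall_dual
    intro φ
    have h1 : ((dualOp f) ^ p) φ ∈ LinearMap.range ((dualOp f) ^ (p + 1)).toLinearMap := hr ▸ ⟨φ, rfl⟩
    obtain ⟨χ, hχ⟩ := h1
    rw [ContinuousLinearMap.coe_coe] at hχ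
    have h2 : φ ((f ^ p) x) = ((dualOp f) ^ p) φ x := (dualOp_pow_apply f p φ x).symm
    rw [h2, ← hχ, dualOp_pow_apply, hx, map_zero]
  · -- notation
    have hsub : LinearMap.range (f ^ p).toLinearMap ≤ (LinearMap.range (f ^ (p + 1)).toLinearMap).topologicalClosure := by
      rintro y ⟨x, rfl⟩
      apply mem_topologicalClosure_of_dual
      intro φ hφ
      have hφ1 : ((dualOp f) ^ (p + 1)) φ = 0 := by
        ext z
        rw [dualOp_pow_apply]
        exact hφ _ ⟨z, rfl⟩
      have hφ2 : ((dualOp f) ^ p) φ = 0 := by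
        have hm : φ ∈ LinearMap.ker ((dualOp f) ^ (p + 1)).toLinearMap := mem_ker'.2 hφ1
        rw [← hk] at hm
        exact mem_ker'.1 hm
      have h2 : φ ((f ^ p) x) = ((dualOp f) ^ p) φ x := (dualOp_pow_apply f p φ x).symm
      rw [ContinuousLinearMap.coe_coe]
      rw [h2, hφ2]
      rfl
    have hCD : (LinearMap.range (f ^ (p + 1)).toLinearMap).topologicalClosure
        = (LinearMap.range (f ^ p).toLinearMap).topologicalClosure :=
      le_antisymm (Submodule.topologicalClosure_mono (range_pow_succ_le f p))
        (Submodule.topologicalClosure_minimal _ hsub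
          (Submodule.isClosed_topologicalClosure _))
    have hKclosed : IsClosed ((LinearMap.ker ((dualOp f) ^ p).toLinearMap :
        Submodule ℂ (StrongDual ℂ X)) : Set (StrongDual ℂ X)) := isClosed_ker _
    haveI : CompleteSpace (LinearMap.ker ((dualOp f) ^ p).toLinearMap) := hKclosed.completeSpace_coe
    let W : (StrongDual ℂ X × LinearMap.ker ((dualOp f) ^ p).toLinearMap) →L[ℂ] StrongDual ℂ X :=
      (dualOp f).comp (ContinuousLinearMap.fst ℂ _ _) +
        (LinearMap.ker ((dualOp f) ^ p).toLinearMap).subtypeL.comp (ContinuousLinearMap.snd ℂ _ _)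
    have hW : ∀ w : StrongDual ℂ X × LinearMap.ker ((dualOp f) ^ p).toLinearMap,
        W w = dualOp f w.1 + (w.2 : StrongDual ℂ X) := fun w => rfl
    have hWsurj : Function.Surjective W := by
      intro φ
      have h1 : ((dualOp f) ^ p) φ ∈ LinearMap.range ((dualOp f) ^ (p + 1)).toLinearMap := hr ▸ ⟨φ, rfl⟩
      obtain ⟨ψ, hψ⟩ := h1
      rw [ContinuousLinearMap.coe_coe] at hψ
      have hkmem : φ - dualOp f ψ ∈ LinearMap.ker ((dualOp f) ^ p).toLinearMap := by
        rw [mem_ker', map_sub]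
        have h3 : ((dualOp f) ^ p) (dualOp f ψ) = ((dualOp f) ^ (p + 1)) ψ := by
          rw [pow_succ (dualOp f) p, ContinuousLinearMap.mul_apply]
        rw [h3, hψ, sub_self]
      refine ⟨(ψ, ⟨φ - dualOp f ψ, hkmem⟩), ?_⟩
      rw [hW]
      show dualOp f ψ + (φ - dualOp f ψ) = φ
      abel
    obtain ⟨M, hMpos, hM⟩ := ContinuousLinearMap.exists_preimage_norm_le (𝕜 := ℂ)
      (E := StrongDual ℂ X × LinearMap.ker ((dualOp f) ^ p).toLinearMap) (F := StrongDual ℂ X) W hWsurj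
    have hkill : ∀ k : StrongDual ℂ X, k ∈ LinearMap.ker ((dualOp f) ^ p).toLinearMap →
        ∀ x ∈ (LinearMap.range (f ^ p).toLinearMap).topologicalClosure, k x = 0 := by
      intro k hk' x hx
      have hset : ((LinearMap.range (f ^ p).toLinearMap : Submodule ℂ X) : Set X) ⊆
          {y : X | k y = 0} := by
        rintro y ⟨z, rfl⟩
        show k ((f ^ p) z) = 0
        have h2 : k ((f ^ p) z) = ((dualOp f) ^ p) k z := (dualOp_pow_apply f p k z).symm
        rw [h2, mem_ker'.1 hk']
        rfl
      have hcl : IsClosed {y : X | k y = 0} := isClosed_eq k.continuous continuous_const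
      have hclosure := closure_minimal hset hcl
      have hx' : x ∈ closure ((LinearMap.range (f ^ p).toLinearMap : Submodule ℂ X) : Set X) := by
        rw [← Submodule.topologicalClosure_coe]
        exact hx
      exact hclosure hx'
    have hlow : ∀ x : X, x ∈ (LinearMap.range (f ^ p).toLinearMap).topologicalClosure →
        ‖x‖ ≤ M * ‖f x‖ := by
      intro x hx
      obtain ⟨φ, hφ1, hφ2⟩ := exists_dual_vector'' ℂ x
      obtain ⟨w, hw1, hw2⟩ := hM φ
      rw [hW] at hw1
      have hk0 : (w.2 : StrongDual ℂ X) x = 0 := hkill w.2 w.2.2 x hx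
      have hφx : φ x = w.1 (f x) := by
        rw [← hw1]
        show (dualOp f w.1 + (w.2 : StrongDual ℂ X)) x = w.1 (f x)
        rw [ContinuousLinearMap.add_apply, hk0, add_zero]
        rfl
      have h1 : ‖x‖ = ‖φ x‖ := by
        rw [hφ2, RCLike.norm_ofReal]
        exact (abs_norm x).symm
      rw [h1, hφx]
      calc ‖w.1 (f x)‖ ≤ ‖w.1‖ * ‖f x‖ := w.1.le_opNorm _
        _ ≤ M * ‖f x‖ := by
            apply mul_le_mul_of_nonneg_right _ (norm_nonneg _)
            calc ‖w.1‖ ≤ ‖w‖ := norm_fst_le w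
              _ ≤ M * ‖φ‖ := hw2
              _ ≤ M * 1 := mul_le_mul_of_nonneg_left hφ1 (le_of_lt hMpos)
              _ = M := mul_one M
    haveI : CompleteSpace ((LinearMap.range (f ^ p).toLinearMap).topologicalClosure) :=
      (Submodule.isClosed_topologicalClosure _).completeSpace_coe
    have himgclosed : IsClosed
        (f '' (((LinearMap.range (f ^ p).toLinearMap).topologicalClosure : Submodule ℂ X) : Set X)) := by
      let gL : ((LinearMap.range (f ^ p).toLinearMap).topologicalClosure : Submodule ℂ X) →L[ℂ] X :=
        f.comp (Submodule.subtypeL _)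
      have hanti : AntilipschitzWith (Real.toNNReal M) gL := by
        apply AntilipschitzWith.of_le_mul_dist
        intro a b
        rw [dist_eq_norm, dist_eq_norm]
        have h5 : ‖((a : X) - (b : X))‖ ≤ M * ‖f ((a : X) - (b : X))‖ := by
          apply hlow
          have := sub_mem a.2 b.2
          exact this
        have h6 : gL a - gL b = f ((a : X) - (b : X)) := by
          show f ((a : X)) - f ((b : X)) = f ((a : X) - (b : X))
          rw [map_sub]
        rw [h6, Real.coe_toNNReal M (le_of_lt hMpos)]
        exact h5
      have hclr := hanti.isClosed_range gL.uniformContinuous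
      have heq : Set.range gL =
          f '' (((LinearMap.range (f ^ p).toLinearMap).topologicalClosure : Submodule ℂ X) : Set X) := by
        ext y
        constructor
        · rintro ⟨c, rfl⟩
          exact ⟨c, c.2, rfl⟩
        · rintro ⟨x, hx, rfl⟩
          exact ⟨⟨x, hx⟩, rfl⟩
      rwa [heq] at hclr
    have hsub2 : (((LinearMap.range (f ^ p).toLinearMap).topologicalClosure : Submodule ℂ X) : Set X) ⊆
        f '' (((LinearMap.range (f ^ p).toLinearMap).topologicalClosure : Submodule ℂ X) : Set X) := by
      have h7 : ((LinearMap.range (f ^ (p + 1)).toLinearMap : Submodule ℂ X) : Set X) ⊆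
          f '' (((LinearMap.range (f ^ p).toLinearMap).topologicalClosure : Submodule ℂ X) : Set X) := by
        rintro y ⟨z, rfl⟩
        refine ⟨(f ^ p) z, Submodule.le_topologicalClosure _ ⟨z, rfl⟩, ?_⟩
        rw [ContinuousLinearMap.coe_coe]
        rw [pow_succ' f p, ContinuousLinearMap.mul_apply]
      have h8 := closure_minimal h7 himgclosed
      intro x hx
      apply h8
      have hx2 : x ∈ ((LinearMap.range (f ^ (p + 1)).toLinearMap).topologicalClosure : Submodule ℂ X) := by
        rw [hCD]
        exact hx
      rw [← Submodule.topologicalClosure_coe]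
      exact hx2
    have hiter : ∀ n : ℕ, ∀ y ∈ (((LinearMap.range (f ^ p).toLinearMap).topologicalClosure :
        Submodule ℂ X) : Set X), ∃ x ∈ (((LinearMap.range (f ^ p).toLinearMap).topologicalClosure :
        Submodule ℂ X) : Set X), (f ^ n) x = y := by
      intro n
      induction n with
      | zero => exact fun y hy => ⟨y, hy, by simp⟩
      | succ n ih =>
        intro y hy
        obtain ⟨c, hc, hfc⟩ := hsub2 hy
        obtain ⟨x, hx, hfx⟩ := ih c hc
        refine ⟨x, hx, ?_⟩
        rw [pow_succ' f n, ContinuousLinearMap.mul_apply, hfx, hfc]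
    refine le_antisymm ?_ (range_pow_succ_le f p)
    rintro y ⟨x, rfl⟩
    have hyC : (f ^ p) x ∈ (((LinearMap.range (f ^ p).toLinearMap).topologicalClosure :
        Submodule ℂ X) : Set X) := Submodule.le_topologicalClosure _ ⟨x, rfl⟩
    obtain ⟨c, hc, hfc⟩ := hiter (p + 1) _ hyC
    exact ⟨c, hfc⟩


lemma dualOp_mul (A B : X →L[ℂ] X) : dualOp (A * B) = dualOp B * dualOp A := by
  ext φ x
  rfl

lemma dualOp_one : dualOp (1 : X →L[ℂ] X) = 1 := by
  ext φ x
  rfl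

set_option maxHeartbeats 1000000 in
lemma isUnit_dualOp_iff (A : X →L[ℂ] X) :
    IsUnit (dualOp A) ↔ IsUnit A := by
  constructor
  · intro h
    obtain ⟨u, hu⟩ := h
    have hv1 : dualOp A * (↑u⁻¹ : StrongDual ℂ X →L[ℂ] StrongDual ℂ X) = 1 := by
      rw [← hu]; exact u.mul_inv
    have hv2 : (↑u⁻¹ : StrongDual ℂ X →L[ℂ] StrongDual ℂ X) * dualOp A = 1 := by
      rw [← hu]; exact u.inv_mul
    set V : StrongDual ℂ X →L[ℂ] StrongDual ℂ X := (↑u⁻¹ : StrongDual ℂ X →L[ℂ] StrongDual ℂ X) with hV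
    -- lower bound
    have hlow : ∀ x : X, ‖x‖ ≤ (‖V‖ + 1) * ‖A x‖ := by
      intro x
      obtain ⟨φ, hφ1, hφ2⟩ := exists_dual_vector'' ℂ x
      have hsur : dualOp A (V φ) = φ := by
        have := congrArg (fun T : StrongDual ℂ X →L[ℂ] StrongDual ℂ X => T φ) hv1
        simpa using this
      have hφx : φ x = (V φ) (A x) := by
        conv_lhs => rw [← hsur]
        rfl
      have h1 : ‖x‖ = ‖φ x‖ := by
        rw [hφ2, RCLike.norm_ofReal]
        exact (abs_norm x).symm
      rw [h1, hφx]
      calc ‖(V φ) (A x)‖ ≤ ‖V φ‖ * ‖A x‖ := (V φ).le_opNorm _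
        _ ≤ (‖V‖ + 1) * ‖A x‖ := by
            apply mul_le_mul_of_nonneg_right _ (norm_nonneg _)
            calc ‖V φ‖ ≤ ‖V‖ * ‖φ‖ := V.le_opNorm φ
              _ ≤ ‖V‖ * 1 := mul_le_mul_of_nonneg_left hφ1 (norm_nonneg V)
              _ ≤ ‖V‖ + 1 := by rw [mul_one]; linarith
    have hanti : AntilipschitzWith (Real.toNNReal (‖V‖ + 1)) A := by
      apply AntilipschitzWith.of_le_mul_dist
      intro a b
      rw [dist_eq_norm, dist_eq_norm, ← map_sub,
        Real.coe_toNNReal _ (by positivity : (0:ℝ) ≤ ‖V‖ + 1)]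
      exact hlow (a - b)
    have hinj : Function.Injective A := hanti.injective
    have hclosed : IsClosed ((LinearMap.range A.toLinearMap : Submodule ℂ X) : Set X) := by
      have := hanti.isClosed_range A.uniformContinuous
      have heq : Set.range A = ((LinearMap.range A.toLinearMap : Submodule ℂ X) : Set X) := by
        ext y; simp [LinearMap.mem_range]
      rwa [heq] at this
    have hsurj : LinearMap.range A.toLinearMap = ⊤ := by
      by_contra hne
      obtain ⟨x, hx⟩ : ∃ x : X, x ∉ LinearMap.range A.toLinearMap := by
        by_contra hall
        push_neg at hall
        exact hne (Submodule.eq_top_iff'.2 hall)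
      obtain ⟨φ, hφ1, hφ2⟩ := exists_dual_annihilator hclosed hx
      have hzero : dualOp A φ = 0 := by
        ext y
        exact hφ1 _ ⟨y, rfl⟩
      have : φ = 0 := by
        have := congrArg (fun T : StrongDual ℂ X →L[ℂ] StrongDual ℂ X => T φ) hv2
        simp only [ContinuousLinearMap.mul_apply, one_apply] at this
        rw [hzero] at this
        simpa using this.symm
      rw [this] at hφ2
      exact hφ2 rfl
    let e := ContinuousLinearEquiv.ofBijective A (LinearMap.ker_eq_bot.2 hinj) hsurj
    have he : ∀ x, e x = A x := fun x => rfl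
    refine ⟨⟨A, (e.symm : X →L[ℂ] X), ?_, ?_⟩, rfl⟩
    · ext x
      show A (e.symm x) = x
      rw [← he]
      exact e.apply_symm_apply x
    · ext x
      show e.symm (A x) = x
      rw [← he]
      exact e.symm_apply_apply x
  · intro h
    obtain ⟨u, hu⟩ := h
    refine ⟨⟨dualOp A, dualOp (↑u⁻¹ : X →L[ℂ] X), ?_, ?_⟩, rfl⟩
    · rw [← dualOp_mul, ← hu, u.inv_mul, dualOp_one]
    · rw [← dualOp_mul, ← hu, u.mul_inv, dualOp_one]

set_option maxHeartbeats 1000000 in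
set_option synthInstance.maxHeartbeats 400000 in
lemma dualOp_algebraMap_sub (A : X →L[ℂ] X) (μ : ℂ) :
    dualOp (algebraMap ℂ (X →L[ℂ] X) μ - A)
      = @algebraMap ℂ (StrongDual ℂ X →L[ℂ] StrongDual ℂ X) _ ContinuousLinearMap.semiring _ μ - dualOp A := by
  ext φ x
  simp [dualOp, Algebra.algebraMap_eq_smul_one, ContinuousLinearMap.sub_apply,
    ContinuousLinearMap.smul_apply, ContinuousLinearMap.one_apply, map_sub, map_smul]

set_option maxHeartbeats 1000000 in
set_option synthInstance.maxHeartbeats 400000 in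
lemma spectrum_dualOp_eq (A : X →L[ℂ] X) :
    spectrum ℂ (dualOp A) = spectrum ℂ A := by
  ext μ
  rw [spectrum.mem_iff, spectrum.mem_iff, not_iff_not, ← dualOp_algebraMap_sub,
    isUnit_dualOp_iff]



lemma dualOp_sub_smul_one (A : X →L[ℂ] X) (lam : ℂ) :
    dualOp (A - lam • 1) = dualOp A - lam • 1 := by
  ext φ x
  simp only [ContinuousLinearMap.sub_apply, ContinuousLinearMap.smul_apply,
    ContinuousLinearMap.one_apply, dualOp_apply', map_sub, map_smul]

lemma ascent_ne_top_iff (T : X →L[ℂ] X) :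
    ascent T ≠ ⊤ ↔ ∃ n, LinearMap.ker (T ^ n).toLinearMap = LinearMap.ker (T ^ (n + 1)).toLinearMap := by
  unfold ascent
  split_ifs with h
  · exact iff_of_true (ENat.coe_ne_top _) h
  · exact iff_of_false (by simp) h

lemma descent_ne_top_iff (T : X →L[ℂ] X) :
    descent T ≠ ⊤ ↔ ∃ n, LinearMap.range (T ^ n).toLinearMap = LinearMap.range (T ^ (n + 1)).toLinearMap := by
  unfold descent
  split_ifs with h
  · exact iff_of_true (ENat.coe_ne_top _) h
  · exact iff_of_false (by simp) h

lemma ascent_eq_descent (T : X →L[ℂ] X)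
    (hk : ∃ n, LinearMap.ker (T ^ n).toLinearMap = LinearMap.ker (T ^ (n + 1)).toLinearMap)
    (hr : ∃ n, LinearMap.range (T ^ n).toLinearMap = LinearMap.range (T ^ (n + 1)).toLinearMap) :
    ascent T = descent T := by
  unfold ascent descent
  rw [if_pos hk, if_pos hr]
  exact_mod_cast congrArg (Nat.cast : ℕ → ℕ∞) (sInf_ker_eq_sInf_range T hk hr)

end PolaroidAux

set_option maxHeartbeats 1000000 in
set_option synthInstance.maxHeartbeats 400000 in
/-- An operator `A` on a complex Banach space is polaroid if and only if its dual
operator `A*` on the dual space `X*` is polaroid. -/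
theorem polaroid_iff_dualOp_polaroid
    {X : Type*} [NormedAddCommGroup X] [NormedSpace ℂ X] [CompleteSpace X]
    (A : X →L[ℂ] X) :
    Polaroid A ↔ Polaroid (dualOp A) := by
  have hspec := PolaroidAux.spectrum_dualOp_eq A
  constructor
  · intro hA lam hiso
    rw [hspec] at hiso
    obtain ⟨hmem, heq, hne⟩ := hA lam hiso
    have hkex := (PolaroidAux.ascent_ne_top_iff (A - lam • 1)).1 hne
    have hrex := (PolaroidAux.descent_ne_top_iff (A - lam • 1)).1 (by rw [← heq]; exact hne)
    obtain ⟨a, ha⟩ := hkex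
    obtain ⟨d, hd⟩ := hrex
    have hkm : LinearMap.ker ((A - lam • 1) ^ (max a d)).toLinearMap
        = LinearMap.ker ((A - lam • 1) ^ (max a d + 1)).toLinearMap := by
      rw [PolaroidAux.ker_pow_stab _ ha _ (le_max_left a d),
        PolaroidAux.ker_pow_stab _ ha (max a d + 1) (by omega)]
    have hrm : LinearMap.range ((A - lam • 1) ^ (max a d)).toLinearMap
        = LinearMap.range ((A - lam • 1) ^ (max a d + 1)).toLinearMap := by
      rw [PolaroidAux.range_pow_stab _ hd _ (le_max_right a d),
        PolaroidAux.range_pow_stab _ hd (max a d + 1) (by omega)]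
    obtain ⟨hk', hr'⟩ := PolaroidAux.dual_stab (A - lam • 1) (max a d) hkm hrm
    have hdual : dualOp A - lam • 1 = dualOp (A - lam • 1) :=
      (PolaroidAux.dualOp_sub_smul_one A lam).symm
    refine ⟨?_, ?_, ?_⟩
    · rw [hspec]
      exact hiso
    · rw [hdual]
      exact PolaroidAux.ascent_eq_descent _ ⟨_, hk'⟩ ⟨_, hr'⟩
    · rw [hdual]
      exact (PolaroidAux.ascent_ne_top_iff _).2 ⟨_, hk'⟩
  · intro hA lam hiso
    have hiso' : IsIsolatedPointOf lam (spectrum ℂ (dualOp A)) := by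
      rw [hspec]
      exact hiso
    obtain ⟨hmem, heq, hne⟩ := hA lam hiso'
    have hdual : dualOp A - lam • 1 = dualOp (A - lam • 1) :=
      (PolaroidAux.dualOp_sub_smul_one A lam).symm
    rw [hdual] at heq hne
    have hkex := (PolaroidAux.ascent_ne_top_iff (dualOp (A - lam • 1))).1 hne
    have hrex := (PolaroidAux.descent_ne_top_iff (dualOp (A - lam • 1))).1
      (by rw [← heq]; exact hne)
    obtain ⟨a, ha⟩ := hkex
    obtain ⟨d, hd⟩ := hrex
    have hkm : LinearMap.ker ((dualOp (A - lam • 1)) ^ (max a d)).toLinearMap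
        = LinearMap.ker ((dualOp (A - lam • 1)) ^ (max a d + 1)).toLinearMap := by
      rw [PolaroidAux.ker_pow_stab _ ha _ (le_max_left a d),
        PolaroidAux.ker_pow_stab _ ha (max a d + 1) (by omega)]
    have hrm : LinearMap.range ((dualOp (A - lam • 1)) ^ (max a d)).toLinearMap
        = LinearMap.range ((dualOp (A - lam • 1)) ^ (max a d + 1)).toLinearMap := by
      rw [PolaroidAux.range_pow_stab _ hd _ (le_max_right a d),
        PolaroidAux.range_pow_stab _ hd (max a d + 1) (by omega)]
    obtain ⟨hk', hr'⟩ := PolaroidAux.stab_of_dual (A - lam • 1) (max a d) hkm hrm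
    refine ⟨hiso, ?_, ?_⟩
    · exact PolaroidAux.ascent_eq_descent _ ⟨_, hk'⟩ ⟨_, hr'⟩
    · exact (PolaroidAux.ascent_ne_top_iff _).2 ⟨_, hk'⟩
end

section
/- Let A be a bounded linear operator on a complex Banach space X and let λ be an isolated point of σ(A). Then λ is a pole of A (i.e., asc(A−λ) = dsc(A−λ) < ∞) if and only if there exists an integer p ≥ 1 such that H_0(A−λ) = ker(A−λ)^p. -/
open Metric Filter NormedSpace
open scoped Classical ENNReal

variable {X : Type*} [NormedAddCommGroup X] [NormedSpace ℂ X]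

/-- The quasinilpotent part `H₀(T) = {x : ‖Tⁿ x‖^(1/n) → 0}` of `T`. -/
def H0set (T : X →L[ℂ] X) : Set X :=
  {x : X | Tendsto (fun n : ℕ => ‖(T ^ n) x‖ ^ (1 / (n : ℝ))) atTop (nhds 0)}

lemma pow_add_apply (T : X →L[ℂ] X) (m n : ℕ) (x : X) :
    (T ^ (m + n)) x = (T ^ m) ((T ^ n) x) := by
  rw [pow_add, ContinuousLinearMap.mul_apply]

lemma ker_stab (T : X →L[ℂ] X) {m : ℕ}
    (h : LinearMap.ker ((T ^ m : X →L[ℂ] X) : X →ₗ[ℂ] X) = LinearMap.ker ((T ^ (m + 1) : X →L[ℂ] X) : X →ₗ[ℂ] X)) :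
    ∀ k : ℕ, LinearMap.ker ((T ^ (m + k) : X →L[ℂ] X) : X →ₗ[ℂ] X) = LinearMap.ker ((T ^ m : X →L[ℂ] X) : X →ₗ[ℂ] X) := by
  intro k
  induction k with
  | zero => rfl
  | succ k ih =>
    refine le_antisymm ?_ ?_
    · intro x hx
      rw [LinearMap.mem_ker] at hx
      have h1 : (T ^ (m + 1)) ((T ^ k) x) = 0 := by
        rw [← pow_add_apply]
        have e : m + 1 + k = m + (k + 1) := by omega
        rw [e]; exact hx
      have h2 : (T ^ k) x ∈ LinearMap.ker ((T ^ m : X →L[ℂ] X) : X →ₗ[ℂ] X) := by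
        rw [h]; exact LinearMap.mem_ker.mpr h1
      have h3 : x ∈ LinearMap.ker ((T ^ (m + k) : X →L[ℂ] X) : X →ₗ[ℂ] X) := by
        rw [LinearMap.mem_ker, ContinuousLinearMap.coe_coe, pow_add_apply]
        exact LinearMap.mem_ker.mp h2
      rw [ih] at h3; exact h3
    · intro x hx
      rw [LinearMap.mem_ker, ContinuousLinearMap.coe_coe] at hx ⊢
      have e : m + (k + 1) = k + 1 + m := by omega
      rw [e, pow_add_apply, hx, map_zero]

lemma range_stab (T : X →L[ℂ] X) {m : ℕ}
    (h : LinearMap.range ((T ^ m : X →L[ℂ] X) : X →ₗ[ℂ] X) = LinearMap.range ((T ^ (m + 1) : X →L[ℂ] X) : X →ₗ[ℂ] X)) :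
    ∀ k : ℕ, LinearMap.range ((T ^ (m + k) : X →L[ℂ] X) : X →ₗ[ℂ] X) = LinearMap.range ((T ^ m : X →L[ℂ] X) : X →ₗ[ℂ] X) := by
  intro k
  induction k with
  | zero => rfl
  | succ k ih =>
    refine le_antisymm ?_ ?_
    · rintro y ⟨x, rfl⟩
      exact ⟨(T ^ (k + 1)) x, (pow_add_apply T m (k + 1) x).symm⟩
    · intro y hy
      rw [← ih] at hy
      obtain ⟨x, hx⟩ := hy
      have h1 : (T ^ m) x ∈ LinearMap.range ((T ^ (m + 1) : X →L[ℂ] X) : X →ₗ[ℂ] X) := by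
        rw [← h]; exact ⟨x, rfl⟩
      obtain ⟨z, hz⟩ := h1
      simp only [ContinuousLinearMap.coe_coe] at hz hx
      refine ⟨z, ?_⟩
      have e : m + (k + 1) = k + (m + 1) := by omega
      rw [e, ContinuousLinearMap.coe_coe, pow_add_apply, hz, ← pow_add_apply]
      have e2 : k + m = m + k := by omega
      rw [e2, hx]

lemma tendsto_rpow_one_div_nat (d : ℝ) (hd : 0 < d) :
    Tendsto (fun n : ℕ => d ^ (1 / (n : ℝ))) atTop (nhds 1) := by
  have h1 : Tendsto (fun n : ℕ => Real.log d * (1 / (n : ℝ))) atTop (nhds 0) := by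
    simpa using tendsto_one_div_atTop_nhds_zero_nat.const_mul (Real.log d)
  have h2 := (Real.continuous_exp.tendsto 0).comp h1
  rw [Real.exp_zero] at h2
  refine h2.congr fun n => ?_
  rw [Function.comp_apply, Real.rpow_def_of_pos hd]

lemma ker_pow_subset_H0 (T : X →L[ℂ] X) (p : ℕ) :
    (LinearMap.ker ((T ^ p : X →L[ℂ] X) : X →ₗ[ℂ] X) : Set X) ⊆ H0set T := by
  intro x hx
  have hx' : (T ^ p) x = 0 := hx
  have h0 : ∀ n : ℕ, p + 1 ≤ n → ‖(T ^ n) x‖ ^ (1 / (n : ℝ)) = 0 := by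
    intro n hn
    have e : n = (n - p) + p := by omega
    rw [e, pow_add_apply, hx', map_zero, norm_zero, Real.zero_rpow]
    exact one_div_ne_zero (Nat.cast_ne_zero.mpr (by omega))
  have hev : (fun _ : ℕ => (0 : ℝ)) =ᶠ[atTop] fun n => ‖(T ^ n) x‖ ^ (1 / (n : ℝ)) := by
    filter_upwards [eventually_ge_atTop (p + 1)] with n hn
    exact (h0 n hn).symm
  exact Tendsto.congr' hev tendsto_const_nhds

lemma H0_subset_ker [CompleteSpace X] (T : X →L[ℂ] X) {q : ℕ}
    (hk : LinearMap.ker ((T ^ q : X →L[ℂ] X) : X →ₗ[ℂ] X) = LinearMap.ker ((T ^ (q + 1) : X →L[ℂ] X) : X →ₗ[ℂ] X))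
    (hr : LinearMap.range ((T ^ q : X →L[ℂ] X) : X →ₗ[ℂ] X) = LinearMap.range ((T ^ (q + 1) : X →L[ℂ] X) : X →ₗ[ℂ] X)) :
    H0set T ⊆ (LinearMap.ker ((T ^ q : X →L[ℂ] X) : X →ₗ[ℂ] X) : Set X) := by
  set N : Submodule ℂ X := LinearMap.ker ((T ^ q : X →L[ℂ] X) : X →ₗ[ℂ] X) with hNdef
  have hNc : IsClosed (N : Set X) := ContinuousLinearMap.isClosed_ker (T ^ q)
  haveI : CompleteSpace N := hNc.completeSpace_coe
  have hN0 : (N : Set X).Nonempty := ⟨0, N.zero_mem⟩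
  set Θ : (X × N) →L[ℂ] X :=
    T.comp (ContinuousLinearMap.fst ℂ X N) +
      N.subtypeL.comp (ContinuousLinearMap.snd ℂ X N) with hΘdef
  have hΘapp : ∀ (u : X) (a : N), Θ (u, a) = T u + (a : X) := by
    intro u a
    simp [hΘdef]
  have hsurj : Function.Surjective Θ := by
    intro w
    have h1 : (T ^ q) w ∈ LinearMap.range ((T ^ (q + 1) : X →L[ℂ] X) : X →ₗ[ℂ] X) := by
      rw [← hr]; exact ⟨w, rfl⟩
    obtain ⟨u, hu⟩ := h1
    simp only [ContinuousLinearMap.coe_coe] at hu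
    have hmem : w - T u ∈ N := by
      have : (T ^ q) (w - T u) = 0 := by
        rw [map_sub]
        have e : (T ^ q) (T u) = (T ^ (q + 1)) u := by
          rw [pow_succ, ContinuousLinearMap.mul_apply]
        rw [e, hu, sub_self]
      exact LinearMap.mem_ker.mpr this
    exact ⟨(u, ⟨w - T u, hmem⟩), by rw [hΘapp]; simp⟩
  obtain ⟨C, hC0, hC⟩ := Θ.exists_preimage_norm_le hsurj
  have key : ∀ z : X, infDist z (N : Set X) ≤ C * infDist (T z) (N : Set X) := by
    intro z
    refine le_of_forall_pos_le_add fun ε hε => ?_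
    have hlt : infDist (T z) (N : Set X) < infDist (T z) (N : Set X) + ε / C :=
      lt_add_of_pos_right _ (div_pos hε hC0)
    obtain ⟨a, haN, ha⟩ := (infDist_lt_iff hN0).mp hlt
    obtain ⟨⟨y, b⟩, hyb, hnorm⟩ := hC (T z - a)
    rw [hΘapp] at hyb
    have h1 : T (z - y) = a + (b : X) := by
      have h' : T z = T y + (b : X) + a := by rw [hyb]; abel
      rw [map_sub, h']; abel
    have hmem : z - y ∈ N := by
      have h2 : (T ^ (q + 1)) (z - y) = 0 := by
        rw [pow_succ, ContinuousLinearMap.mul_apply, h1]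
        exact LinearMap.mem_ker.mp (N.add_mem haN b.2)
      have h3 : z - y ∈ LinearMap.ker ((T ^ (q + 1) : X →L[ℂ] X) : X →ₗ[ℂ] X) := LinearMap.mem_ker.mpr h2
      rw [← hk] at h3
      exact h3
    have h3 : infDist z (N : Set X) ≤ dist z (z - y) := infDist_le_dist_of_mem hmem
    have h4 : dist z (z - y) = ‖y‖ := by
      rw [dist_eq_norm]; simp
    have h5 : ‖y‖ ≤ C * ‖T z - a‖ := le_trans (norm_fst_le (y, b)) hnorm
    have h6 : ‖T z - a‖ = dist (T z) a := (dist_eq_norm _ _).symm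
    calc infDist z (N : Set X) ≤ ‖y‖ := h4 ▸ h3
      _ ≤ C * dist (T z) a := by rw [← h6]; exact h5
      _ ≤ C * (infDist (T z) (N : Set X) + ε / C) :=
          mul_le_mul_of_nonneg_left ha.le hC0.le
      _ = C * infDist (T z) (N : Set X) + ε := by
          rw [mul_add, mul_div_cancel₀ _ (ne_of_gt hC0)]
  have iter : ∀ (n : ℕ) (z : X),
      infDist z (N : Set X) ≤ C ^ n * infDist ((T ^ n) z) (N : Set X) := by
    intro n
    induction n with
    | zero => intro z; simp
    | succ n ih =>
      intro z
      calc infDist z (N : Set X) ≤ C * infDist (T z) (N : Set X) := key z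
        _ ≤ C * (C ^ n * infDist ((T ^ n) (T z)) (N : Set X)) :=
            mul_le_mul_of_nonneg_left (ih (T z)) hC0.le
        _ = C ^ (n + 1) * infDist ((T ^ (n + 1)) z) (N : Set X) := by
            rw [pow_succ T n, ContinuousLinearMap.mul_apply]
            ring
  intro x hx
  have hten : Tendsto (fun n : ℕ => ‖(T ^ n) x‖ ^ (1 / (n : ℝ))) atTop (nhds 0) := hx
  by_contra hxN
  have hd : 0 < infDist x (N : Set X) :=
    (hNc.notMem_iff_infDist_pos hN0).mp hxN
  set d := infDist x (N : Set X) with hddef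
  have hlb : ∀ n : ℕ, d / C ^ n ≤ ‖(T ^ n) x‖ := by
    intro n
    rw [div_le_iff₀ (pow_pos hC0 n)]
    calc d ≤ C ^ n * infDist ((T ^ n) x) (N : Set X) := iter n x
      _ ≤ C ^ n * ‖(T ^ n) x‖ := by
          refine mul_le_mul_of_nonneg_left ?_ (pow_pos hC0 n).le
          have h0m : infDist ((T ^ n) x) (N : Set X) ≤ dist ((T ^ n) x) 0 :=
            infDist_le_dist_of_mem N.zero_mem
          simpa [dist_zero_right] using h0m
      _ = ‖(T ^ n) x‖ * C ^ n := mul_comm _ _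
  have hev : ∀ᶠ n : ℕ in atTop,
      d ^ (1 / (n : ℝ)) / C ≤ ‖(T ^ n) x‖ ^ (1 / (n : ℝ)) := by
    filter_upwards [eventually_ge_atTop 1] with n hn
    have hn0 : ((n : ℝ)) ≠ 0 := Nat.cast_ne_zero.mpr (by omega)
    have hCn : ((C ^ n : ℝ)) ^ (1 / (n : ℝ)) = C := by
      rw [← Real.rpow_natCast C n, ← Real.rpow_mul hC0.le, mul_one_div,
        div_self hn0, Real.rpow_one]
    have h1 : (d / C ^ n) ^ (1 / (n : ℝ)) ≤ ‖(T ^ n) x‖ ^ (1 / (n : ℝ)) :=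
      Real.rpow_le_rpow (by positivity) (hlb n) (by positivity)
    rwa [Real.div_rpow hd.le (pow_pos hC0 n).le, hCn] at h1
  have hlow : Tendsto (fun n : ℕ => d ^ (1 / (n : ℝ)) / C) atTop (nhds (1 / C)) :=
    (tendsto_rpow_one_div_nat d hd).div_const C
  have hcon : 1 / C ≤ 0 := le_of_tendsto_of_tendsto hlow hten hev
  have : (0 : ℝ) < 1 / C := by positivity
  linarith

lemma tendsto_rpow_one_div_nat' (d : ℝ) (hd : 0 < d) :
    Tendsto (fun n : ℕ => d ^ (1 / (n : ℝ))) atTop (nhds 1) := by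
  have h1 : Tendsto (fun n : ℕ => Real.log d * (1 / (n : ℝ))) atTop (nhds 0) := by
    simpa using tendsto_one_div_atTop_nhds_zero_nat.const_mul (Real.log d)
  have h2 := (Real.continuous_exp.tendsto 0).comp h1
  rw [Real.exp_zero] at h2
  refine h2.congr fun n => ?_
  rw [Function.comp_apply, Real.rpow_def_of_pos hd]

lemma exists_PS [CompleteSpace X] (A : X →L[ℂ] X) (lam : ℂ)
    (hiso : IsIsolatedPointOf lam (spectrum ℂ A)) :
    ∃ P S : X →L[ℂ] X,
      (A - lam • 1) * S = P - 1 ∧ ∀ x : X, P x ∈ H0set (A - lam • 1) := by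
  obtain ⟨hmem, U, hU, hUs⟩ := hiso
  obtain ⟨r₀, hr₀, hball⟩ := Metric.mem_nhds_iff.mp hU
  -- resolvent set facts
  have hres : ∀ z : ℂ, z ≠ lam → dist z lam < r₀ → z ∈ resolventSet ℂ A := by
    intro z hz hdist
    by_contra hzres
    have hzspec : z ∈ spectrum ℂ A := spectrum.mem_iff.mpr fun h => hzres h
    have hzin : z ∈ U ∩ spectrum ℂ A := ⟨hball (mem_ball.mpr hdist), hzspec⟩
    rw [hUs] at hzin
    exact hz hzin
  set r : ℝ := r₀ / 2 with hrdef
  have hrpos : 0 < r := by positivity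
  have hrlt : r < r₀ := by
    rw [hrdef]; linarith
  have hdiff : ∀ z : ℂ, z ≠ lam → dist z lam < r₀ →
      DifferentiableAt ℂ (resolvent A) z := fun z h1 h2 =>
    (spectrum.hasDerivAt_resolvent (hres z h1 h2)).differentiableAt
  -- key algebraic identity
  have keyId : ∀ z ∈ resolventSet ℂ A,
      (A - lam • 1) * resolvent A z = (z - lam) • resolvent A z - 1 := by
    intro z hz
    have hunit : IsUnit (algebraMap ℂ (X →L[ℂ] X) z - A) := hz
    have h1 : (algebraMap ℂ (X →L[ℂ] X) z - A) * resolvent A z = 1 :=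
      Ring.mul_inverse_cancel _ hunit
    have hT : A - lam • 1 =
        (z - lam) • (1 : X →L[ℂ] X) - (algebraMap ℂ (X →L[ℂ] X) z - A) := by
      rw [Algebra.algebraMap_eq_smul_one, sub_smul]
      exact (sub_sub_sub_cancel_left _ _ _).symm
    rw [hT, sub_mul, h1, smul_mul_assoc, one_mul]
  -- continuity of the resolvent on good sets
  have hcontOn : ∀ s : Set ℂ, (∀ z ∈ s, z ≠ lam ∧ dist z lam < r₀) →
      ContinuousOn (resolvent A) s := fun s hs z hz =>
    ((hdiff z (hs z hz).1 (hs z hz).2).continuousAt).continuousWithinAt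
  -- integrability of the basic integrands
  have hsphere : ∀ {r' : ℝ}, 0 < r' → r' ≤ r → ∀ z ∈ sphere lam r',
      z ≠ lam ∧ dist z lam < r₀ := by
    intro r' h0 hle z hz
    rw [mem_sphere] at hz
    constructor
    · rintro rfl
      rw [dist_self] at hz
      linarith
    · calc dist z lam = r' := hz
        _ ≤ r := hle
        _ < r₀ := hrlt
  have hIntR : ∀ (n : ℕ) {r' : ℝ}, 0 < r' → r' ≤ r →
      CircleIntegrable (fun z => (z - lam) ^ n • resolvent A z) lam r' := by
    intro n r' h0 hle
    refine ContinuousOn.circleIntegrable h0.le ?_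
    exact (((continuous_id.sub continuous_const).pow n).continuousOn).smul
      (hcontOn _ (hsphere h0 hle))
  have hIntR0 : CircleIntegrable (resolvent A) lam r := by
    refine ContinuousOn.circleIntegrable hrpos.le ?_
    exact hcontOn _ (hsphere hrpos le_rfl)
  have hIntS : CircleIntegrable (fun z => (z - lam)⁻¹ • resolvent A z) lam r := by
    refine ContinuousOn.circleIntegrable hrpos.le ?_
    refine ContinuousOn.smul (f := fun z : ℂ => (z - lam)⁻¹) (g := resolvent A) ?_ (hcontOn _ (hsphere hrpos le_rfl))
    refine ContinuousOn.inv₀ ((continuous_id.sub continuous_const).continuousOn) ?_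
    intro z hz
    exact sub_ne_zero.mpr (hsphere hrpos le_rfl z hz).1
  have hIntOne : ∀ n : ℕ, CircleIntegrable (fun z => (z - lam) ^ n • (1 : X →L[ℂ] X)) lam r :=
    fun n => (((continuous_id.sub continuous_const).pow n).smul
      continuous_const).continuousOn.circleIntegrable hrpos.le
  -- a continuous linear map commutes with the circle integral
  have hmulInt : ∀ (M : X →L[ℂ] X) (f : ℂ → X →L[ℂ] X) (R' : ℝ),
      CircleIntegrable f lam R' →
      M * (∮ z in C(lam, R'), f z) = ∮ z in C(lam, R'), M * f z := by
    intro M f R' hf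
    set L : (X →L[ℂ] X) →L[ℂ] (X →L[ℂ] X) :=
      ContinuousLinearMap.mul ℂ (X →L[ℂ] X) M with hLdef
    have happ : ∀ u : X →L[ℂ] X, L u = M * u := fun u => rfl
    calc M * (∮ z in C(lam, R'), f z) = L (∮ z in C(lam, R'), f z) := rfl
      _ = ∫ θ in (0:ℝ)..2 * Real.pi,
            L (deriv (circleMap lam R') θ • f (circleMap lam R' θ)) :=
          (L.intervalIntegral_comp_comm hf.out).symm
      _ = ∮ z in C(lam, R'), M * f z := by
          unfold circleIntegral
          refine intervalIntegral.integral_congr fun θ _ => ?_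
          rw [L.map_smul, happ]
  -- the circle integral of (z-lam)^n (n : ℕ) vanishes
  have hzero : ∀ n : ℕ, (∮ z in C(lam, r), (z - lam) ^ n) = 0 := by
    intro n
    have h := circleIntegral.integral_sub_zpow_of_ne
      (n := (n : ℤ)) (by omega) lam lam r
    simpa [zpow_natCast] using h
  -- the scalar
  set c₀ : ℂ := (2 * (Real.pi : ℂ) * Complex.I)⁻¹ with hc₀def
  have hc₀ : c₀ * (2 * (Real.pi : ℂ) * Complex.I) = 1 :=
    inv_mul_cancel₀ Complex.two_pi_I_ne_zero
  set Pop : X →L[ℂ] X := c₀ • ∮ z in C(lam, r), resolvent A z with hPopdef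
  set Sop : X →L[ℂ] X := c₀ • ∮ z in C(lam, r), (z - lam)⁻¹ • resolvent A z with hSopdef
  -- step identity under the integral
  have hstep : ∀ n : ℕ,
      (∮ z in C(lam, r), (A - lam • 1) * ((z - lam) ^ n • resolvent A z)) =
        ∮ z in C(lam, r), (z - lam) ^ (n + 1) • resolvent A z := by
    intro n
    have hcongr : Set.EqOn
        (fun z => (A - lam • 1) * ((z - lam) ^ n • resolvent A z))
        (fun z => (z - lam) ^ (n + 1) • resolvent A z -
          (z - lam) ^ n • (1 : X →L[ℂ] X)) (sphere lam r) := by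
      intro z hz
      have hzgood := hsphere hrpos le_rfl z hz
      have hzres := hres z hzgood.1 hzgood.2
      show (A - lam • 1) * ((z - lam) ^ n • resolvent A z) = _
      rw [mul_smul_comm, keyId z hzres, smul_sub, smul_smul, ← pow_succ]
    rw [circleIntegral.integral_congr hrpos.le hcongr,
      circleIntegral.integral_sub (hIntR (n + 1) hrpos le_rfl) (hIntOne n),
      circleIntegral.integral_smul_const, hzero, zero_smul, sub_zero]
  -- T^n * Pop as an integral
  have hTP : ∀ n : ℕ, (A - lam • 1) ^ n * Pop =
      c₀ • ∮ z in C(lam, r), (z - lam) ^ n • resolvent A z := by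
    intro n
    induction n with
    | zero =>
      rw [pow_zero, one_mul, hPopdef]
      congr 1
      refine circleIntegral.integral_congr hrpos.le fun z hz => ?_
      simp
    | succ n ih =>
      rw [pow_succ', mul_assoc, ih, mul_smul_comm,
        hmulInt _ _ _ (hIntR n hrpos le_rfl), hstep n]
  -- deformation of the contour
  have hdeform : ∀ (n : ℕ) {r' : ℝ}, 0 < r' → r' ≤ r →
      (∮ z in C(lam, r), (z - lam) ^ n • resolvent A z) =
        ∮ z in C(lam, r'), (z - lam) ^ n • resolvent A z := by
    intro n r' h0 hle
    refine Complex.circleIntegral_eq_of_differentiable_on_annulus_off_countable h0 hle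
      Set.countable_empty ?_ ?_
    · refine (((continuous_id.sub continuous_const).pow n).continuousOn).smul
        (hcontOn _ ?_)
      rintro z ⟨hz1, hz2⟩
      rw [mem_closedBall] at hz1
      rw [mem_ball, not_lt] at hz2
      refine ⟨fun h => ?_, lt_of_le_of_lt hz1 hrlt⟩
      rw [h, dist_self] at hz2; linarith
    · rintro z ⟨⟨hz1, hz2⟩, -⟩
      rw [mem_ball] at hz1
      rw [mem_closedBall, not_le] at hz2
      refine DifferentiableAt.smul ((differentiableAt_id.sub_const lam).pow n)
        (hdiff z (fun h => ?_) (lt_trans hz1 hrlt))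
      rw [h, dist_self] at hz2; linarith
  -- norm bound
  have hM : ∀ {r' : ℝ}, 0 < r' → r' ≤ r → ∃ M' : ℝ, 0 ≤ M' ∧
      ∀ n : ℕ, ‖(A - lam • 1) ^ n * Pop‖ ≤ r' ^ (n + 1) * M' := by
    intro r' h0 hle
    obtain ⟨M0, hM0⟩ := (isCompact_sphere lam r').exists_bound_of_continuousOn
      (hcontOn _ (hsphere h0 hle))
    refine ⟨max M0 0, le_max_right _ _, fun n => ?_⟩
    have hb : ∀ z ∈ sphere lam r',
        ‖(z - lam) ^ n • resolvent A z‖ ≤ r' ^ n * max M0 0 := by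
      intro z hz
      rw [norm_smul ((z - lam) ^ n) (resolvent A z), norm_pow]
      have h1 : ‖z - lam‖ = r' := by
        rw [← dist_eq_norm]; exact mem_sphere.mp hz
      rw [h1]
      exact mul_le_mul_of_nonneg_left (le_trans (hM0 z hz) (le_max_left _ _))
        (pow_nonneg h0.le n)
    have hnorm := circleIntegral.norm_integral_le_of_norm_le_const h0.le hb
    rw [hTP n, hdeform n h0 hle,
      norm_smul c₀ (∮ z in C(lam, r'), (z - lam) ^ n • resolvent A z)]
    have hc₀norm : ‖c₀‖ = (2 * Real.pi)⁻¹ := by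
      rw [hc₀def, norm_inv]
      simp [norm_mul, Complex.norm_real, Complex.norm_I,
        abs_of_nonneg Real.pi_nonneg]
    rw [hc₀norm]
    calc (2 * Real.pi)⁻¹ * ‖∮ z in C(lam, r'), (z - lam) ^ n • resolvent A z‖
        ≤ (2 * Real.pi)⁻¹ * (2 * Real.pi * r' * (r' ^ n * max M0 0)) := by
          refine mul_le_mul_of_nonneg_left hnorm ?_
          positivity
      _ = r' ^ (n + 1) * max M0 0 := by
          have hpi : (2 * Real.pi) ≠ 0 := by positivity
          field_simp
          ring
  -- P x lies in the quasinilpotent part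
  have hPH : ∀ x : X, Pop x ∈ H0set (A - lam • 1) := by
    intro x
    show Tendsto (fun n : ℕ => ‖((A - lam • 1) ^ n) (Pop x)‖ ^ (1 / (n : ℝ)))
      atTop (nhds 0)
    rw [NormedAddCommGroup.tendsto_nhds_zero]
    intro ε hε
    set r' : ℝ := min r (ε / 3) with hr'def
    have h0 : 0 < r' := lt_min hrpos (by positivity)
    have hle : r' ≤ r := min_le_left _ _
    have hr'ε : r' ≤ ε / 3 := min_le_right _ _
    obtain ⟨M', hM'0, hbnd⟩ := hM h0 hle
    set Cc : ℝ := r' * M' * ‖x‖ + 1 with hCcdef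
    have hCc : 0 < Cc := by positivity
    have han : ∀ n : ℕ, ‖((A - lam • 1) ^ n) (Pop x)‖ ≤ r' ^ n * Cc := by
      intro n
      calc ‖((A - lam • 1) ^ n) (Pop x)‖
          = ‖((A - lam • 1) ^ n * Pop) x‖ := by
            rw [ContinuousLinearMap.mul_apply]
        _ ≤ ‖(A - lam • 1) ^ n * Pop‖ * ‖x‖ := ContinuousLinearMap.le_opNorm _ _
        _ ≤ (r' ^ (n + 1) * M') * ‖x‖ :=
            mul_le_mul_of_nonneg_right (hbnd n) (norm_nonneg x)
        _ = r' ^ n * (r' * M' * ‖x‖) := by ring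
        _ ≤ r' ^ n * Cc := by
            refine mul_le_mul_of_nonneg_left ?_ (pow_nonneg h0.le n)
            rw [hCcdef]; linarith
    have hev2 : ∀ᶠ n : ℕ in atTop, Cc ^ (1 / (n : ℝ)) < 2 :=
      (tendsto_rpow_one_div_nat' Cc hCc).eventually
        (gt_mem_nhds (by norm_num : (1 : ℝ) < 2))
    filter_upwards [hev2, eventually_ge_atTop 1] with n hn2 hn1
    have hn0 : ((n : ℝ)) ≠ 0 := Nat.cast_ne_zero.mpr (by omega)
    have h2 : ‖((A - lam • 1) ^ n) (Pop x)‖ ^ (1 / (n : ℝ)) ≤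
        (r' ^ n * Cc) ^ (1 / (n : ℝ)) :=
      Real.rpow_le_rpow (norm_nonneg _) (han n) (by positivity)
    have h3 : (r' ^ n * Cc) ^ (1 / (n : ℝ)) = r' * Cc ^ (1 / (n : ℝ)) := by
      rw [Real.mul_rpow (pow_nonneg h0.le n) hCc.le, ← Real.rpow_natCast r' n,
        ← Real.rpow_mul h0.le, mul_one_div, div_self hn0, Real.rpow_one]
    rw [h3] at h2
    have h5 : ‖‖((A - lam • 1) ^ n) (Pop x)‖ ^ (1 / (n : ℝ))‖ =
        ‖((A - lam • 1) ^ n) (Pop x)‖ ^ (1 / (n : ℝ)) :=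
      Real.norm_of_nonneg (Real.rpow_nonneg (norm_nonneg _) _)
    rw [h5]
    calc ‖((A - lam • 1) ^ n) (Pop x)‖ ^ (1 / (n : ℝ))
        ≤ r' * Cc ^ (1 / (n : ℝ)) := h2
      _ < r' * 2 := mul_lt_mul_of_pos_left hn2 h0
      _ ≤ (ε / 3) * 2 := mul_le_mul_of_nonneg_right hr'ε (by norm_num)
      _ < ε := by linarith
  -- the key operator identity
  have hTS : (A - lam • 1) * Sop = Pop - 1 := by
    rw [hSopdef, mul_smul_comm, hmulInt _ _ _ hIntS]
    have hcongr : Set.EqOn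
        (fun z => (A - lam • 1) * ((z - lam)⁻¹ • resolvent A z))
        (fun z => resolvent A z - (z - lam)⁻¹ • (1 : X →L[ℂ] X))
        (sphere lam r) := by
      intro z hz
      have hzgood := hsphere hrpos le_rfl z hz
      have hzres := hres z hzgood.1 hzgood.2
      show (A - lam • 1) * ((z - lam)⁻¹ • resolvent A z) = _
      rw [mul_smul_comm, keyId z hzres, smul_sub,
        inv_smul_smul₀ (sub_ne_zero.mpr hzgood.1)]
    have hIntOne' : CircleIntegrable
        (fun z => (z - lam)⁻¹ • (1 : X →L[ℂ] X)) lam r := by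
      refine ContinuousOn.circleIntegrable hrpos.le ?_
      refine ContinuousOn.smul (f := fun z : ℂ => (z - lam)⁻¹) (g := fun _ : ℂ => (1 : X →L[ℂ] X)) ?_ continuousOn_const
      refine ContinuousOn.inv₀ ((continuous_id.sub continuous_const).continuousOn) ?_
      exact fun z hz => sub_ne_zero.mpr (hsphere hrpos le_rfl z hz).1
    rw [circleIntegral.integral_congr hrpos.le hcongr,
      circleIntegral.integral_sub hIntR0 hIntOne',
      circleIntegral.integral_smul_const,
      circleIntegral.integral_sub_inv_of_mem_ball (mem_ball_self hrpos),
      smul_sub, smul_smul, hc₀, one_smul, hPopdef]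
  exact ⟨Pop, Sop, hTS, hPH⟩

lemma ker_pow_mono (T : X →L[ℂ] X) {a b : ℕ} (h : a ≤ b) :
    LinearMap.ker ((T ^ a : X →L[ℂ] X) : X →ₗ[ℂ] X) ≤ LinearMap.ker ((T ^ b : X →L[ℂ] X) : X →ₗ[ℂ] X) := by
  intro x hx
  rw [LinearMap.mem_ker, ContinuousLinearMap.coe_coe] at hx ⊢
  have e : b = (b - a) + a := by omega
  rw [e, pow_add_apply, hx, map_zero]

/-- For an isolated point `lam` of `σ(A)`: `lam` is a pole of `A` if and only if
`H₀(A - lam) = ker (A - lam)^p` for some integer `p ≥ 1`. -/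
theorem isPoleOf_iff_H0_eq_ker_pow
    {X : Type*} [NormedAddCommGroup X] [NormedSpace ℂ X] [CompleteSpace X]
    (A : X →L[ℂ] X) (lam : ℂ) (hiso : IsIsolatedPointOf lam (spectrum ℂ A)) :
    IsPoleOf A lam ↔
      ∃ p : ℕ, 1 ≤ p ∧
        H0set (A - lam • 1) = (LinearMap.ker (((A - lam • 1) ^ p : X →L[ℂ] X) : X →ₗ[ℂ] X) : Set X) := by
  set T : X →L[ℂ] X := A - lam • 1 with hTdef
  set Ks : Set ℕ := {n : ℕ | LinearMap.ker ((T ^ n : X →L[ℂ] X) : X →ₗ[ℂ] X) = LinearMap.ker ((T ^ (n + 1) : X →L[ℂ] X) : X →ₗ[ℂ] X)}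
    with hKsdef
  set Rs : Set ℕ := {n : ℕ | LinearMap.range ((T ^ n : X →L[ℂ] X) : X →ₗ[ℂ] X) = LinearMap.range ((T ^ (n + 1) : X →L[ℂ] X) : X →ₗ[ℂ] X)}
    with hRsdef
  constructor
  · rintro ⟨-, heq, hne⟩
    have hexK : ∃ n : ℕ, n ∈ Ks := by
      by_contra h
      push_neg at h
      have : ascent T = ⊤ := by
        simp only [ascent]
        rw [if_neg]
        intro ⟨n, hn⟩
        exact h n hn
      exact hne this
    have hdne : descent T ≠ ⊤ := heq ▸ hne
    have hexR : ∃ n : ℕ, n ∈ Rs := by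
      by_contra h
      push_neg at h
      have : descent T = ⊤ := by
        simp only [descent]
        rw [if_neg]
        intro ⟨n, hn⟩
        exact h n hn
      exact hdne this
    set m : ℕ := sInf Ks with hmdef
    set n' : ℕ := sInf Rs with hn'def
    have hascval : ascent T = (m : ℕ∞) := by
      simp only [ascent]
      rw [if_pos]
      exact hexK
    have hdesval : descent T = (n' : ℕ∞) := by
      simp only [descent]
      rw [if_pos]
      exact hexR
    have hmn : m = n' := by
      have h1 : (m : ℕ∞) = (n' : ℕ∞) := by rw [← hascval, ← hdesval]; exact heq
      exact_mod_cast h1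
    have hm : LinearMap.ker ((T ^ m : X →L[ℂ] X) : X →ₗ[ℂ] X) = LinearMap.ker ((T ^ (m + 1) : X →L[ℂ] X) : X →ₗ[ℂ] X) := Nat.sInf_mem hexK
    have hn : LinearMap.range ((T ^ n' : X →L[ℂ] X) : X →ₗ[ℂ] X) = LinearMap.range ((T ^ (n' + 1) : X →L[ℂ] X) : X →ₗ[ℂ] X) :=
      Nat.sInf_mem hexR
    rw [← hmn] at hn
    refine ⟨max m 1, le_max_right _ _, ?_⟩
    apply Set.Subset.antisymm
    · intro x hx
      exact ker_pow_mono T (le_max_left m 1) (H0_subset_ker T hm hn hx)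
    · exact ker_pow_subset_H0 T _
  · rintro ⟨p, hp1, hH⟩
    obtain ⟨P, S, hTS, hPH⟩ := exists_PS A lam hiso
    have hTPzero : ∀ x : X, (T ^ p) (P x) = 0 := by
      intro x
      have h1 : P x ∈ H0set T := hPH x
      rw [hH] at h1
      exact h1
    have hKp : p ∈ Ks := by
      show LinearMap.ker ((T ^ p : X →L[ℂ] X) : X →ₗ[ℂ] X) = LinearMap.ker ((T ^ (p + 1) : X →L[ℂ] X) : X →ₗ[ℂ] X)
      refine le_antisymm ?_ ?_
      · intro x hx
        rw [LinearMap.mem_ker, ContinuousLinearMap.coe_coe] at hx ⊢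
        rw [pow_succ', ContinuousLinearMap.mul_apply, hx, map_zero]
      · intro x hx
        have hx' : x ∈ H0set T := ker_pow_subset_H0 T (p + 1) hx
        rw [hH] at hx'
        exact hx'
    have hRp : p ∈ Rs := by
      show LinearMap.range ((T ^ p : X →L[ℂ] X) : X →ₗ[ℂ] X) = LinearMap.range ((T ^ (p + 1) : X →L[ℂ] X) : X →ₗ[ℂ] X)
      refine le_antisymm ?_ ?_
      · rintro y ⟨x, rfl⟩
        refine ⟨-(S x), ?_⟩
        have h1 : T (S x) = P x - x := by
          have h0 : (T * S) x = (P - 1) x := by rw [hTS]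
          simpa [ContinuousLinearMap.mul_apply, ContinuousLinearMap.sub_apply,
            ContinuousLinearMap.one_apply] using h0
        have h2 : x = P x - T (S x) := by rw [h1]; abel
        calc (T ^ (p + 1)) (-(S x)) = -((T ^ p) (T (S x))) := by
              rw [map_neg, pow_succ, ContinuousLinearMap.mul_apply]
          _ = (T ^ p) (P x) - (T ^ p) (T (S x)) := by rw [hTPzero x, zero_sub]
          _ = (T ^ p) x := by rw [← map_sub, ← h2]
      · rintro y ⟨x, rfl⟩
        exact ⟨T x, by rw [pow_succ, ContinuousLinearMap.coe_coe, ContinuousLinearMap.coe_coe, ContinuousLinearMap.mul_apply]⟩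
    set m : ℕ := sInf Ks with hmdef
    set n' : ℕ := sInf Rs with hn'def
    have hm : LinearMap.ker ((T ^ m : X →L[ℂ] X) : X →ₗ[ℂ] X) = LinearMap.ker ((T ^ (m + 1) : X →L[ℂ] X) : X →ₗ[ℂ] X) :=
      Nat.sInf_mem ⟨p, hKp⟩
    have hn : LinearMap.range ((T ^ n' : X →L[ℂ] X) : X →ₗ[ℂ] X) = LinearMap.range ((T ^ (n' + 1) : X →L[ℂ] X) : X →ₗ[ℂ] X) :=
      Nat.sInf_mem ⟨p, hRp⟩
    -- m ≤ n'
    have hmn : m ≤ n' := by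
      refine Nat.sInf_le ?_
      show LinearMap.ker ((T ^ n' : X →L[ℂ] X) : X →ₗ[ℂ] X) = LinearMap.ker ((T ^ (n' + 1) : X →L[ℂ] X) : X →ₗ[ℂ] X)
      refine le_antisymm ?_ ?_
      · intro x hx
        rw [LinearMap.mem_ker, ContinuousLinearMap.coe_coe] at hx ⊢
        rw [pow_succ', ContinuousLinearMap.mul_apply, hx, map_zero]
      · intro x hx
        rw [LinearMap.mem_ker, ContinuousLinearMap.coe_coe] at hx ⊢
        have h1 : (T ^ n') x ∈ LinearMap.range ((T ^ (n' + (m + 1)) : X →L[ℂ] X) : X →ₗ[ℂ] X) := by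
          rw [range_stab T hn (m + 1)]
          exact ⟨x, rfl⟩
        obtain ⟨y, hy⟩ := h1
        simp only [ContinuousLinearMap.coe_coe] at hy
        have h2 : (T ^ (m + (n' + 2))) y = 0 := by
          have e : m + (n' + 2) = 1 + (n' + (m + 1)) := by omega
          rw [e, pow_add_apply, hy, ← pow_add_apply]
          have e2 : 1 + n' = n' + 1 := by omega
          rw [e2]
          exact hx
        have h3 : y ∈ LinearMap.ker ((T ^ m : X →L[ℂ] X) : X →ₗ[ℂ] X) := by
          rw [← ker_stab T hm (n' + 2)]
          exact LinearMap.mem_ker.mpr h2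
        have h4 : (T ^ m) y = 0 := LinearMap.mem_ker.mp h3
        rw [← hy]
        have e4 : n' + (m + 1) = (n' + 1) + m := by omega
        rw [e4, pow_add_apply, h4, map_zero]
    -- n' ≤ m
    have hnm : n' ≤ m := by
      by_contra hlt
      push_neg at hlt
      obtain ⟨k, hk⟩ : ∃ k, n' = k + 1 := ⟨n' - 1, by omega⟩
      have hmk : m ≤ k := by omega
      have hnk : LinearMap.range ((T ^ (k + 1) : X →L[ℂ] X) : X →ₗ[ℂ] X) = LinearMap.range ((T ^ (k + 1 + 1) : X →L[ℂ] X) : X →ₗ[ℂ] X) := by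
        rw [← hk]
        exact hn
      have hmem : k ∈ Rs := by
        show LinearMap.range ((T ^ k : X →L[ℂ] X) : X →ₗ[ℂ] X) = LinearMap.range ((T ^ (k + 1) : X →L[ℂ] X) : X →ₗ[ℂ] X)
        refine le_antisymm ?_ ?_
        · rintro y ⟨x, rfl⟩
          have h1 : (T ^ (k + 1)) x ∈ LinearMap.range ((T ^ (k + 1 + 1) : X →L[ℂ] X) : X →ₗ[ℂ] X) := by
            rw [← hnk]
            exact ⟨x, rfl⟩
          obtain ⟨z, hz⟩ := h1
          simp only [ContinuousLinearMap.coe_coe] at hz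
          have h2 : (T ^ (k + 1)) (x - T z) = 0 := by
            rw [map_sub]
            have e : (T ^ (k + 1)) (T z) = (T ^ (k + 1 + 1)) z := by
              rw [pow_add_apply T (k + 1) 1 z, pow_one]
            rw [e, hz, sub_self]
          have h3 : (T ^ k) (x - T z) = 0 := by
            have k1 : x - T z ∈ LinearMap.ker ((T ^ (m + (k + 1 - m)) : X →L[ℂ] X) : X →ₗ[ℂ] X) := by
              have e : m + (k + 1 - m) = k + 1 := by omega
              rw [e]
              exact LinearMap.mem_ker.mpr h2
            rw [ker_stab T hm] at k1
            have k2 : x - T z ∈ LinearMap.ker ((T ^ (m + (k - m)) : X →L[ℂ] X) : X →ₗ[ℂ] X) := by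
              rw [ker_stab T hm]
              exact k1
            have e : m + (k - m) = k := by omega
            rw [e] at k2
            exact LinearMap.mem_ker.mp k2
          refine ⟨z, ?_⟩
          have h5 : (T ^ k) x - (T ^ k) (T z) = 0 := by
            rw [← map_sub]
            exact h3
          have e : (T ^ k) (T z) = (T ^ (k + 1)) z := by
            rw [pow_succ, ContinuousLinearMap.mul_apply]
          rw [ContinuousLinearMap.coe_coe, ← e]
          exact (eq_of_sub_eq_zero h5).symm
        · rintro y ⟨x, rfl⟩
          exact ⟨T x, by rw [pow_succ, ContinuousLinearMap.coe_coe, ContinuousLinearMap.coe_coe, ContinuousLinearMap.mul_apply]⟩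
      have hle := Nat.sInf_le hmem
      omega
    refine ⟨hiso, ?_, ?_⟩
    · show ascent T = descent T
      simp only [ascent, descent]
      rw [if_pos ⟨p, hKp⟩, if_pos ⟨p, hRp⟩]
      exact_mod_cast congrArg (Nat.cast : ℕ → ℕ∞) (le_antisymm hmn hnm)
    · show ascent T ≠ ⊤
      simp only [ascent]
      rw [if_pos ⟨p, hKp⟩]
      exact ENat.coe_ne_top _
end

section
/- Let T be a bounded linear operator on a complex Banach space X, let M be a closed T-invariant subspace, and set T₁ = T|_M. If λ ∈ ℂ and p ≥ 1 is an integer such that H_0(T−λ) = ker(T−λ)^p, then H_0(T₁−λ) = ker(T₁−λ)^p; in particular asc(T₁−λ) ≤ p. -/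
open Metric Filter NormedSpace
open scoped Classical ENNReal

variable {X : Type*} [NormedAddCommGroup X] [NormedSpace ℂ X]

/-- The restriction of `T` to an invariant subspace `M`, as an operator on `M`. -/
def restrictCLM (T : X →L[ℂ] X) (M : Submodule ℂ X) (hM : ∀ x ∈ M, T x ∈ M) :
    M →L[ℂ] M :=
  { toLinearMap := (T : X →ₗ[ℂ] X).restrict hM
    cont := Continuous.subtype_mk (T.continuous.comp continuous_subtype_val) _ }

/-- `T` is hereditarily polaroid: the restriction of `T` to every closed invariant
subspace is polaroid. -/
def HereditarilyPolaroid (T : X →L[ℂ] X) : Prop :=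
  ∀ (M : Submodule ℂ X), IsClosed (M : Set X) → ∀ (hM : ∀ x ∈ M, T x ∈ M),
    Polaroid (restrictCLM T M hM)

lemma restrict_coe_apply {X : Type*} [NormedAddCommGroup X] [NormedSpace ℂ X]
    (T : X →L[ℂ] X) (M : Submodule ℂ X)
    (hMi : ∀ x ∈ M, T x ∈ M) (lam : ℂ) (y : M) :
    (((restrictCLM T M hMi - lam • 1) y : M) : X) = (T - lam • 1) (y : X) := by
  rfl

lemma restrict_coe_pow {X : Type*} [NormedAddCommGroup X] [NormedSpace ℂ X]
    (T : X →L[ℂ] X) (M : Submodule ℂ X)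
    (hMi : ∀ x ∈ M, T x ∈ M) (lam : ℂ) (n : ℕ) (x : M) :
    ((((restrictCLM T M hMi - lam • 1) ^ n) x : M) : X) = ((T - lam • 1) ^ n) (x : X) := by
  induction n with
  | zero => simp
  | succ n ih =>
    rw [pow_succ', pow_succ']
    simp only [ContinuousLinearMap.mul_apply]
    rw [restrict_coe_apply, ih]

/-- If `H₀(T - lam) = ker (T - lam)^p` and `M` is a closed `T`-invariant subspace,
then the restriction `T₁ = T|_M` satisfies `H₀(T₁ - lam) = ker (T₁ - lam)^p`;
in particular `asc (T₁ - lam) ≤ p`. -/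
theorem H0_eq_ker_pow_restrict
    {X : Type*} [NormedAddCommGroup X] [NormedSpace ℂ X] [CompleteSpace X]
    (T : X →L[ℂ] X) (M : Submodule ℂ X) (hMc : IsClosed (M : Set X))
    (hMi : ∀ x ∈ M, T x ∈ M) (lam : ℂ) (p : ℕ) (hp : 1 ≤ p)
    (h : H0set (T - lam • 1) = (LinearMap.ker (((T - lam • 1) ^ p : X →L[ℂ] X) : X →ₗ[ℂ] X) : Set X)) :
    H0set (restrictCLM T M hMi - lam • 1) =
        (LinearMap.ker (((restrictCLM T M hMi - lam • 1) ^ p : M →L[ℂ] M) : M →ₗ[ℂ] M) : Set M) ∧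
      ascent (restrictCLM T M hMi - lam • 1) ≤ (p : ℕ∞) := by

  set R := restrictCLM T M hMi - lam • 1 with hR
  set S := T - lam • 1 with hS
  have hcoe : ∀ (n : ℕ) (x : M), (((R ^ n) x : M) : X) = (S ^ n) (x : X) :=
    restrict_coe_pow T M hMi lam
  have hnorm : ∀ (n : ℕ) (x : M), ‖(R ^ n) x‖ = ‖(S ^ n) (x : X)‖ := by
    intro n x
    rw [← hcoe n x]; rfl
  have hH0 : ∀ x : M, x ∈ H0set R ↔ (x : X) ∈ H0set S := by
    intro x
    simp only [H0set, Set.mem_setOf_eq]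
    constructor <;> intro hx <;>
      [exact hx.congr (fun n => by rw [hnorm]);
       exact hx.congr (fun n => by rw [hnorm])]
  have hker : ∀ (n : ℕ) (x : M), x ∈ LinearMap.ker ((R ^ n : M →L[ℂ] M) : M →ₗ[ℂ] M) ↔ (S ^ n) (x : X) = 0 := by
    intro n x
    rw [LinearMap.mem_ker]
    constructor
    · intro hx
      rw [← hcoe n x]
      exact congrArg Subtype.val (by exact_mod_cast hx)
    · intro hx
      ext
      rw [ContinuousLinearMap.coe_coe, hcoe n x, hx]; rfl
  have hmain : H0set R = (LinearMap.ker ((R ^ p : M →L[ℂ] M) : M →ₗ[ℂ] M) : Set M) := by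
    ext x
    rw [SetLike.mem_coe, hker p x, hH0 x, h, SetLike.mem_coe, LinearMap.mem_ker, ContinuousLinearMap.coe_coe]
  refine ⟨hmain, ?_⟩
  -- ker R^{p+1} ⊆ H0set R
  have hsub : ∀ x : M, x ∈ LinearMap.ker ((R ^ (p + 1) : M →L[ℂ] M) : M →ₗ[ℂ] M) → x ∈ H0set R := by
    intro x hx
    rw [LinearMap.mem_ker, ContinuousLinearMap.coe_coe] at hx
    have hev : ∀ᶠ n : ℕ in atTop, ‖(R ^ n) x‖ ^ (1 / (n : ℝ)) = 0 := by
      filter_upwards [eventually_ge_atTop (p + 1)] with n hn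
      have : (R ^ n) x = 0 := by
        have : R ^ n = R ^ (n - (p + 1)) * R ^ (p + 1) := by
          rw [← pow_add, Nat.sub_add_cancel hn]
        rw [this, ContinuousLinearMap.mul_apply, hx, map_zero]
      rw [this, norm_zero]
      refine Real.zero_rpow (one_div_ne_zero ?_)
      have hn0 : 0 < n := by omega
      exact_mod_cast hn0.ne'
    exact Tendsto.congr' (hev.mono fun n hn => hn.symm) tendsto_const_nhds
  have hkerEq : LinearMap.ker ((R ^ p : M →L[ℂ] M) : M →ₗ[ℂ] M) = LinearMap.ker ((R ^ (p + 1) : M →L[ℂ] M) : M →ₗ[ℂ] M) := by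
    apply le_antisymm
    · intro x hx
      rw [LinearMap.mem_ker, ContinuousLinearMap.coe_coe] at hx ⊢
      rw [pow_succ', ContinuousLinearMap.mul_apply, hx, map_zero]
    · intro x hx
      have := hsub x hx
      rw [hmain] at this
      exact this
  rw [ascent, if_pos ⟨p, hkerEq⟩]
  exact_mod_cast Nat.sInf_le hkerEq
end
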